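/- For an odd prime p, the edge-connectivity of the unit graph G(Z_p) equals p-2. -/

import Mathlib

open SimpleGraph Finset
open scoped Classical

/-- The unit graph of a commutative ring: distinct `x, y` adjacent iff `x + y` is a unit. -/
def unitGraphR (R : Type*) [CommRing R] : SimpleGraph R where
  Adj x y := x ≠ y ∧ IsUnit (x + y)
  symm := ⟨fun x y ⟨h1, h2⟩ => ⟨h1.symm, by rwa [add_comm]⟩⟩
  loopless := ⟨fun x ⟨h, _⟩ => h rfl⟩

/-- The unit graph of `ZMod n`. -/
def unitGraph (n : ℕ) : SimpleGraph (ZMod n) := unitGraphR (ZMod n)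

/-- The number of edges of `G` with one endpoint in `W` and the other outside `W`. -/
noncomputable def cutSize {V : Type*} [Fintype V] (G : SimpleGraph V) (W : Finset V) : ℕ :=
  (G.edgeFinset.filter (fun e => (∃ x ∈ e, x ∈ W) ∧ (∃ x ∈ e, x ∉ W))).card

/-- The edge-connectivity of `G`: minimum cut size over nonempty proper vertex subsets. -/
noncomputable def edgeConn {V : Type*} [Fintype V] (G : SimpleGraph V) : ℕ :=
  sInf {n | ∃ W : Finset V, W.Nonempty ∧ W ≠ Finset.univ ∧ n = cutSize G W}

/-- The incidence matrix of `G` over `F_2`, rows indexed by vertices, columns by edges. -/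
noncomputable def incMat {V : Type*} [Fintype V] (G : SimpleGraph V) :
    Matrix V G.edgeFinset (ZMod 2) :=
  fun v e => if v ∈ (e : Sym2 V) then 1 else 0

/-- The binary code generated by the rows of the incidence matrix of `G`. -/
noncomputable def rowCode {V : Type*} [Fintype V] (G : SimpleGraph V) :
    Submodule (ZMod 2) (G.edgeFinset → ZMod 2) :=
  Submodule.span (ZMod 2) (Set.range (incMat G))

/-- The minimum Hamming weight of a nonzero codeword of the incidence-matrix code of `G`. -/
noncomputable def minDist {V : Type*} [Fintype V] (G : SimpleGraph V) : ℕ :=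
  sInf {w | ∃ c ∈ rowCode G, c ≠ 0 ∧ w = hammingNorm c}

lemma cutSize_eq_sum {V : Type*} [Fintype V] [DecidableEq V] (G : SimpleGraph V) (W : Finset V) :
    cutSize G W = ∑ x ∈ W, ((Wᶜ).filter (fun y => G.Adj x y)).card := by
  have hcard :
      ((W ×ˢ Wᶜ).filter (fun z => G.Adj z.1 z.2)).card = cutSize G W := by
    unfold cutSize
    refine Finset.card_bij (fun (z : V × V) _ => Sym2.mk z.1 z.2) ?_ ?_ ?_
    · rintro ⟨x, y⟩ hz
      simp only [Finset.mem_filter, Finset.mem_product, Finset.mem_compl] at hz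
      obtain ⟨⟨hxW, hyW⟩, hadj⟩ := hz
      simp only [Finset.mem_filter, SimpleGraph.mem_edgeFinset, SimpleGraph.mem_edgeSet]
      exact ⟨hadj, ⟨x, Sym2.mem_mk_left x y, hxW⟩, ⟨y, Sym2.mem_mk_right x y, hyW⟩⟩
    · rintro ⟨a, b⟩ ha ⟨c, d⟩ hc h
      simp only [Finset.mem_filter, Finset.mem_product, Finset.mem_compl] at ha hc
      change s(a, b) = s(c, d) at h
      rw [Sym2.eq_iff] at h
      rcases h with ⟨rfl, rfl⟩ | ⟨rfl, rfl⟩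
      · rfl
      · exact absurd ha.1.1 hc.1.2
    · intro e he
      induction e using Sym2.ind with
      | _ u v =>
        simp only [Finset.mem_filter, SimpleGraph.mem_edgeFinset,
          SimpleGraph.mem_edgeSet] at he
        obtain ⟨hadj, ⟨a, haem, haW⟩, ⟨b, hbem, hbW⟩⟩ := he
        rw [Sym2.mem_iff] at haem hbem
        rcases haem with rfl | rfl <;> rcases hbem with rfl | rfl
        · exact absurd haW hbW
        · refine ⟨(a, b), ?_, rfl⟩
          simp only [Finset.mem_filter, Finset.mem_product, Finset.mem_compl]
          exact ⟨⟨haW, hbW⟩, hadj⟩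
        · refine ⟨(a, b), ?_, Sym2.eq_swap⟩
          simp only [Finset.mem_filter, Finset.mem_product, Finset.mem_compl]
          exact ⟨⟨haW, hbW⟩, hadj.symm⟩
        · exact absurd haW hbW
  rw [← hcard, Finset.card_filter, Finset.sum_product]
  exact Finset.sum_congr rfl fun x _ => (Finset.card_filter _ _).symm

lemma cutSize_compl {V : Type*} [Fintype V] [DecidableEq V] (G : SimpleGraph V) (W : Finset V) :
    cutSize G Wᶜ = cutSize G W := by
  unfold cutSize
  congr 1
  ext e
  simp only [Finset.mem_filter, Finset.mem_compl, not_not]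
  tauto

lemma unitGraph_adj (p : ℕ) [Fact p.Prime] (x y : ZMod p) :
    (unitGraph p).Adj x y ↔ y ≠ x ∧ y ≠ -x := by
  show x ≠ y ∧ IsUnit (x + y) ↔ _
  rw [isUnit_iff_ne_zero]
  constructor
  · rintro ⟨h1, h2⟩
    exact ⟨fun h => h1 h.symm, fun h => h2 (by rw [h]; ring)⟩
  · rintro ⟨h1, h2⟩
    refine ⟨fun h => h1 h.symm, fun h => h2 ?_⟩
    linear_combination h

lemma filter_adj_card (p : ℕ) [Fact p.Prime] (W : Finset (ZMod p)) (x : ZMod p)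
    (hx : x ∈ W) :
    ((Wᶜ).filter (fun y => (unitGraph p).Adj x y)).card
      = Wᶜ.card - (if -x ∈ Wᶜ then 1 else 0) := by
  have h : (Wᶜ).filter (fun y => (unitGraph p).Adj x y) = Wᶜ.erase (-x) := by
    ext y
    simp only [Finset.mem_filter, Finset.mem_erase, Finset.mem_compl, unitGraph_adj]
    constructor
    · rintro ⟨hy, _, h2⟩; exact ⟨h2, hy⟩
    · rintro ⟨h2, hy⟩
      exact ⟨hy, fun h => hy (h ▸ hx), h2⟩
  rw [h, Finset.card_erase_eq_ite]
  split_ifs <;> simp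

theorem unitGraph_ZMod_p_edgeConn (p : ℕ) [Fact p.Prime] (hodd : Odd p) :
    edgeConn (unitGraph p) = p - 2 := by
  have hp : p.Prime := Fact.out
  have hp3 : 3 ≤ p := by
    have h2 := hp.two_le
    have : p ≠ 2 := by rintro rfl; exact (by decide : ¬ Odd 2) hodd
    omega
  haveI : NeZero p := ⟨hp.ne_zero⟩
  have hcardV : Fintype.card (ZMod p) = p := ZMod.card p
  -- the example cut
  have hone : (-1 : ZMod p) ≠ 1 := by
    intro h
    have h2 : ((2 : ℕ) : ZMod p) = 0 := by push_cast; linear_combination -h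
    rw [ZMod.natCast_eq_zero_iff] at h2
    have := Nat.le_of_dvd (by norm_num) h2
    omega
  have hW1 : cutSize (unitGraph p) ({1} : Finset (ZMod p)) = p - 2 := by
    rw [cutSize_eq_sum, Finset.sum_singleton,
      filter_adj_card p _ 1 (Finset.mem_singleton_self 1)]
    have hmem : (-1 : ZMod p) ∈ ({1} : Finset (ZMod p))ᶜ := by
      simpa using hone
    rw [if_pos hmem, Finset.card_compl, Finset.card_singleton, hcardV]
    omega
  set S : Set ℕ :=
    {n | ∃ W : Finset (ZMod p), W.Nonempty ∧ W ≠ Finset.univ ∧ n = cutSize (unitGraph p) W}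
    with hS
  have hmemS : p - 2 ∈ S := by
    refine ⟨{1}, Finset.singleton_nonempty 1, ?_, hW1.symm⟩
    intro h
    have h0 : (0 : ZMod p) ∈ ({1} : Finset (ZMod p)) := h ▸ Finset.mem_univ 0
    rw [Finset.mem_singleton] at h0
    exact zero_ne_one h0
  -- lower bound for any W with |W| ≤ |Wᶜ|
  have key : ∀ W : Finset (ZMod p), W.Nonempty → W.card ≤ Wᶜ.card →
      p - 2 ≤ cutSize (unitGraph p) W := by
    intro W hne hle
    have hsum : W.card + Wᶜ.card = p := by
      have := Finset.card_add_card_compl W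
      rwa [hcardV] at this
    have hk1 : 1 ≤ W.card := Finset.card_pos.mpr hne
    have hc2 : 2 ≤ Wᶜ.card := by omega
    have hbound : W.card * (Wᶜ.card - 1) ≤ cutSize (unitGraph p) W := by
      rw [cutSize_eq_sum]
      calc W.card * (Wᶜ.card - 1) = ∑ _x ∈ W, (Wᶜ.card - 1) := by
            rw [Finset.sum_const, smul_eq_mul]
        _ ≤ _ := by
            apply Finset.sum_le_sum
            intro x hx
            rw [filter_adj_card p W x hx]
            split_ifs <;> omega
    refine le_trans ?_ hbound
    obtain ⟨a, ha⟩ := Nat.exists_eq_add_of_le hk1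
    obtain ⟨b, hb⟩ := Nat.exists_eq_add_of_le hc2
    rw [ha, hb]
    have h1 : (1 + a) * (2 + b - 1) = a * b + a + b + 1 := by
      rw [show 2 + b - 1 = 1 + b by omega]; ring
    omega
  have hlb : ∀ n ∈ S, p - 2 ≤ n := by
    rintro n ⟨W, hne, hnuniv, rfl⟩
    rcases le_or_gt W.card Wᶜ.card with h | h
    · exact key W hne h
    · rw [← cutSize_compl]
      have hlt : W.card < p := by
        have h' := (Finset.card_lt_iff_ne_univ W).mpr hnuniv
        rwa [hcardV] at h'
      have hsum := Finset.card_add_card_compl W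
      rw [hcardV] at hsum
      refine key Wᶜ ?_ ?_
      · rw [← Finset.card_pos]; omega
      · rw [compl_compl]; omega
  have h1 : edgeConn (unitGraph p) ≤ p - 2 := Nat.sInf_le hmemS
  have h2 : p - 2 ≤ edgeConn (unitGraph p) := hlb _ (Nat.sInf_mem ⟨_, hmemS⟩)
  omega
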